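/- arXiv:1709.10312 — 3 statements merged into one kernel-verified Lean document; each statement's English description precedes it below -/
import Mathlib

section
/- Let (V_k)_{k≥0} be a nonnegative stochastic process adapted to a filtration, and suppose there exist constants 0 < κ̂ < 1 and ψ̂ ≥ 0 such that E[V_{k+1} | F_k] - V_k ≤ -κ̂ V_k + ψ̂ almost surely for all k. Then for any ε > 0 with ε ≥ ψ̂/κ̂ and any time horizon T ∈ ℕ, P( max_{0 ≤ k ≤ T} V_k ≥ ε ) ≤ 1 - (1 - V_0/ε)(1 - ψ̂/ε)^T (when V_0 ≤ ε). -/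
open MeasureTheory Filter

theorem kushner_bound_case1
    {Ω : Type*} {m : MeasurableSpace Ω} {μ : Measure Ω} [IsProbabilityMeasure μ]
    (ℱ : Filtration ℕ m) (V : ℕ → Ω → ℝ)
    (hadapted : Adapted ℱ V) (hint : ∀ k, Integrable (V k) μ)
    (hnonneg : ∀ k ω, 0 ≤ V k ω)
    (κ ψ : ℝ) (hκ0 : 0 < κ) (hκ1 : κ < 1) (hψ : 0 ≤ ψ)
    (hdrift : ∀ k, μ[V (k + 1) | ℱ k] ≤ᵐ[μ] fun ω => V k ω - κ * V k ω + ψ)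
    (v0 : ℝ) (hV0 : V 0 = fun _ => v0)
    (ε : ℝ) (hε : 0 < ε) (hεκ : ψ / κ ≤ ε) (hv0ε : v0 ≤ ε) (T : ℕ) :
    (μ {ω | ∃ k ≤ T, ε ≤ V k ω}).toReal ≤
      1 - (1 - v0 / ε) * (1 - ψ / ε) ^ T := by
  set c : ℝ := 1 - ψ / ε with hc
  have hψε : ψ / ε ≤ κ := by
    rw [div_le_iff₀ hκ0] at hεκ
    rw [div_le_iff₀ hε]
    linarith [hεκ]
  have hc0 : 0 ≤ c := by
    have : ψ / ε ≤ κ := hψε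
    simp only [hc]; linarith
  set A : ℕ → Set Ω := fun k => {ω | ∀ j ≤ k, V j ω < ε} with hA
  have hAmeas : ∀ k, MeasurableSet[ℱ k] (A k) := by
    intro k
    have hEq : A k = ⋂ j ∈ Finset.Iic k, {ω | V j ω < ε} := by
      ext ω; simp [hA]
    rw [hEq]
    refine MeasurableSet.biInter (Set.to_countable _) fun j hj => ?_
    have hj' : j ≤ k := Finset.mem_Iic.mp hj
    exact ℱ.mono hj' _ (measurableSet_lt (hadapted j) measurable_const)
  have hAmeas' : ∀ k, MeasurableSet (A k) := fun k => ℱ.le k _ (hAmeas k)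
  -- main induction
  have key : ∀ k, (ε - v0) * c ^ k ≤ ∫ ω in A k, (ε - V k ω) ∂μ := by
    intro k
    induction k with
    | zero =>
      by_cases h : v0 < ε
      · have hA0 : A 0 = Set.univ := by
          ext ω
          simp only [hA, Set.mem_setOf_eq, Set.mem_univ, iff_true]
          intro j hj
          interval_cases j
          rw [hV0]; exact h
        rw [hA0]
        have : (fun ω => ε - V 0 ω) = fun _ : Ω => ε - v0 := by
          funext ω; rw [hV0]
        rw [this]
        simp
      · have hv0 : v0 = ε := le_antisymm hv0ε (not_lt.mp h)
        have : (fun ω => ε - V 0 ω) = fun _ : Ω => (0 : ℝ) := by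
          funext ω; rw [hV0]; simp [hv0]
        rw [this, hv0]
        simp
    | succ k ih =>
      have hintc : Integrable (μ[V (k + 1) | ℱ k]) μ := integrable_condExp
      have hintR : Integrable (fun ω => V k ω - κ * V k ω + ψ) μ :=
        ((hint k).sub ((hint k).const_mul κ)).add (integrable_const ψ)
      -- step 1: restrict to A (k+1)
      have hsub : A (k + 1) ⊆ A k := by
        intro ω hω j hj
        exact hω j (hj.trans (Nat.le_succ k))
      have hintf : Integrable (fun ω => ε - V (k + 1) ω) μ :=
        (integrable_const ε).sub (hint (k + 1))
      have step1 : ∫ ω in A k, (ε - V (k + 1) ω) ∂μ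
          ≤ ∫ ω in A (k + 1), (ε - V (k + 1) ω) ∂μ := by
        rw [← integral_indicator (hAmeas' k), ← integral_indicator (hAmeas' (k + 1))]
        refine integral_mono (hintf.indicator (hAmeas' k))
          (hintf.indicator (hAmeas' (k + 1))) fun ω => ?_
        by_cases h1 : ω ∈ A (k + 1)
        · simp [Set.indicator_of_mem h1, Set.indicator_of_mem (hsub h1)]
        by_cases h0 : ω ∈ A k
        · simp only [Set.indicator_of_mem h0, Set.indicator_of_notMem h1]
          have : ε ≤ V (k + 1) ω := by
            by_contra hcon
            exact h1 (fun j hj => by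
              rcases Nat.lt_succ_iff_lt_or_eq.mp (Nat.lt_succ_of_le hj) with h | h
              · exact h0 j (Nat.lt_succ_iff.mp h)
              · rw [h]; exact not_le.mp hcon)
          linarith
        · simp [Set.indicator_of_notMem h1, Set.indicator_of_notMem h0]
      -- step 2: conditional expectation
      have step2 : ∫ ω in A k, V (k + 1) ω ∂μ = ∫ ω in A k, (μ[V (k + 1) | ℱ k]) ω ∂μ :=
        (setIntegral_condExp (ℱ.le k) (hint (k + 1)) (hAmeas k)).symm
      have step3 : ∫ ω in A k, (μ[V (k + 1) | ℱ k]) ω ∂μ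
          ≤ ∫ ω in A k, (V k ω - κ * V k ω + ψ) ∂μ := by
        refine setIntegral_mono_ae hintc.integrableOn hintR.integrableOn ?_
        exact hdrift k
      -- step 4: pointwise drift comparison
      have step4 : ∫ ω in A k, (ε - (V k ω - κ * V k ω + ψ)) ∂μ
          ≥ ∫ ω in A k, c * (ε - V k ω) ∂μ := by
        refine setIntegral_mono ((((integrable_const ε).sub (hint k)).const_mul c).integrableOn)
          (((integrable_const ε).sub hintR).integrableOn) fun ω => ?_
        have hVk := hnonneg k ω
        have h2 : (κ - ψ / ε) * V k ω ≥ 0 := mul_nonneg (by linarith) hVk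
        have hψε' : ψ / ε * ε = ψ := div_mul_cancel₀ ψ (ne_of_gt hε)
        simp only [hc]
        nlinarith [h2, hψε']
      -- assemble
      have hI1 : ∫ ω in A k, (ε - V (k + 1) ω) ∂μ
          = ∫ ω in A k, (ε : ℝ) ∂μ - ∫ ω in A k, V (k + 1) ω ∂μ :=
        integral_sub (integrable_const ε).integrableOn (hint (k + 1)).integrableOn
      have hI2 : ∫ ω in A k, (ε - (V k ω - κ * V k ω + ψ)) ∂μ
          = ∫ ω in A k, (ε : ℝ) ∂μ - ∫ ω in A k, (V k ω - κ * V k ω + ψ) ∂μ :=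
        integral_sub (integrable_const ε).integrableOn hintR.integrableOn
      have hmul : ∫ ω in A k, c * (ε - V k ω) ∂μ = c * ∫ ω in A k, (ε - V k ω) ∂μ :=
        integral_const_mul c _
      have chain : c * ∫ ω in A k, (ε - V k ω) ∂μ
          ≤ ∫ ω in A (k + 1), (ε - V (k + 1) ω) ∂μ := by
        rw [← hmul]
        calc ∫ ω in A k, c * (ε - V k ω) ∂μ
            ≤ ∫ ω in A k, (ε - (V k ω - κ * V k ω + ψ)) ∂μ := step4
          _ = ∫ ω in A k, (ε : ℝ) ∂μ - ∫ ω in A k, (V k ω - κ * V k ω + ψ) ∂μ := hI2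
          _ ≤ ∫ ω in A k, (ε : ℝ) ∂μ - ∫ ω in A k, (μ[V (k + 1) | ℱ k]) ω ∂μ := by
              linarith [step3]
          _ = ∫ ω in A k, (ε - V (k + 1) ω) ∂μ := by rw [hI1, step2]
          _ ≤ ∫ ω in A (k + 1), (ε - V (k + 1) ω) ∂μ := step1
      calc (ε - v0) * c ^ (k + 1) = c * ((ε - v0) * c ^ k) := by ring
        _ ≤ c * ∫ ω in A k, (ε - V k ω) ∂μ := by
            exact mul_le_mul_of_nonneg_left ih hc0
        _ ≤ _ := chain
  -- bound integral by ε * P(A T)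
  have hIT : ∫ ω in A T, (ε - V T ω) ∂μ ≤ ε * (μ (A T)).toReal := by
    calc ∫ ω in A T, (ε - V T ω) ∂μ
        ≤ ∫ _ω in A T, (ε : ℝ) ∂μ := by
          refine setIntegral_mono (((integrable_const ε).sub (hint T)).integrableOn)
            (integrable_const ε).integrableOn fun ω => ?_
          linarith [hnonneg T ω]
      _ = (μ (A T)).toReal * ε := by simp [setIntegral_const, Measure.real]
      _ = ε * (μ (A T)).toReal := mul_comm _ _
  have hPAT : (1 - v0 / ε) * c ^ T ≤ (μ (A T)).toReal := by
    have h1 : (ε - v0) * c ^ T ≤ ε * (μ (A T)).toReal := (key T).trans hIT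
    rw [← div_le_iff₀' hε] at h1
    calc (1 - v0 / ε) * c ^ T = (ε - v0) * c ^ T / ε := by
          field_simp
      _ ≤ (μ (A T)).toReal := h1
  -- complement
  have hSc : {ω | ∃ k ≤ T, ε ≤ V k ω} = (A T)ᶜ := by
    ext ω
    simp only [hA, Set.mem_setOf_eq, Set.mem_compl_iff, not_forall, not_lt]
    constructor
    · rintro ⟨k, hk, hle⟩; exact ⟨k, hk, hle⟩
    · rintro ⟨k, hk, hle⟩; exact ⟨k, hk, hle⟩
  have hcompl : (μ (A T)ᶜ).toReal = 1 - (μ (A T)).toReal := by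
    rw [measure_compl (hAmeas' T) (measure_ne_top μ _), measure_univ]
    rw [ENNReal.toReal_sub_of_le prob_le_one ENNReal.one_ne_top]
    simp
  rw [hSc, hcompl]
  linarith
end

section
/- Let (V_k)_{k≥0} be a nonnegative stochastic process adapted to a filtration such that E[V_{k+1} | F_k] - V_k ≤ -κ̂ V_k + ψ̂ almost surely for all k, with 0 < κ̂ < 1 and ψ̂ ≥ 0. Then for any ε > 0 with ε < ψ̂/κ̂ and any T ∈ ℕ, P( max_{0 ≤ k ≤ T} V_k ≥ ε ) ≤ (V_0/ε)(1-κ̂)^T + (ψ̂/(κ̂ ε))(1 - (1-κ̂)^T). -/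
open MeasureTheory Filter

theorem kushner_bound_case2
    {Ω : Type*} {m : MeasurableSpace Ω} {μ : Measure Ω} [IsProbabilityMeasure μ]
    (ℱ : Filtration ℕ m) (V : ℕ → Ω → ℝ)
    (hadapted : Adapted ℱ V) (hint : ∀ k, Integrable (V k) μ)
    (hnonneg : ∀ k ω, 0 ≤ V k ω)
    (κ ψ : ℝ) (hκ0 : 0 < κ) (hκ1 : κ < 1) (hψ : 0 ≤ ψ)
    (hdrift : ∀ k, μ[V (k + 1) | ℱ k] ≤ᵐ[μ] fun ω => V k ω - κ * V k ω + ψ)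
    (v0 : ℝ) (hV0 : V 0 = fun _ => v0)
    (ε : ℝ) (hε : 0 < ε) (hεκ : ε < ψ / κ) (T : ℕ) :
    (μ {ω | ∃ k ≤ T, ε ≤ V k ω}).toReal ≤
      (v0 / ε) * (1 - κ) ^ T + (ψ / (κ * ε)) * (1 - (1 - κ) ^ T) := by
  classical
  have hVsm : ∀ n, StronglyMeasurable (V n) := fun n => ((hadapted n).mono (ℱ.le n) le_rfl).stronglyMeasurable
  have hε' : (1 : ℝ) ≤ ψ / (κ * ε) := by
    have h : (1 : ℝ) < ψ / κ / ε := (one_lt_div hε).2 hεκ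
    rw [div_div] at h
    exact h.le
  have ha0 : (0 : ℝ) ≤ 1 - κ := by linarith
  have ha1 : (1 : ℝ) - κ ≤ 1 := by linarith
  have hp0 : ∀ d : ℕ, (0 : ℝ) ≤ (1 - κ) ^ d := fun d => pow_nonneg ha0 d
  have hp1 : ∀ d : ℕ, (1 - κ) ^ d ≤ 1 := fun d => pow_le_one₀ ha0 ha1
  set B : ℕ → ℝ → ℝ :=
    fun d v => (v / ε) * (1 - κ) ^ d + (ψ / (κ * ε)) * (1 - (1 - κ) ^ d) with hB
  have hB0 : ∀ d v, 0 ≤ v → 0 ≤ B d v := by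
    intro d v hv
    simp only [hB]
    have h1 : 0 ≤ (v / ε) * (1 - κ) ^ d :=
      mul_nonneg (div_nonneg hv hε.le) (hp0 d)
    have h2 : 0 ≤ (ψ / (κ * ε)) * (1 - (1 - κ) ^ d) := by
      have := hp1 d
      nlinarith [hε']
    linarith
  have hB1 : ∀ d v, ε ≤ v → 1 ≤ B d v := by
    intro d v hv
    simp only [hB]
    have h1 : 1 ≤ v / ε := (one_le_div hε).2 hv
    nlinarith [mul_nonneg (sub_nonneg.2 h1) (hp0 d),
      mul_nonneg (sub_nonneg.2 hε') (sub_nonneg.2 (hp1 d))]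
  set A : ℕ → ℕ → Set Ω := fun d n => {ω | ∃ k ≤ d, ε ≤ V (n + k) ω} with hA
  have hAm : ∀ d n, MeasurableSet (A d n) := by
    intro d n
    have : A d n = ⋃ k ∈ Set.Iic d, {ω | ε ≤ V (n + k) ω} := by
      ext ω; simp [hA]
    rw [this]
    exact MeasurableSet.biUnion (Set.to_countable _) fun k _ =>
      measurableSet_le measurable_const (hVsm (n + k)).measurable
  have hA0 : ∀ n, A 0 n = {ω | ε ≤ V n ω} := by
    intro n; ext ω; simp [hA, Nat.le_zero]
  have hSn : ∀ n, MeasurableSet[ℱ n] {ω | ε ≤ V n ω} := fun n =>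
    measurableSet_le measurable_const (hadapted n)
  set f : ℕ → ℕ → Ω → ℝ := fun d n => (A d n).indicator 1 with hf
  have hfint : ∀ d n, Integrable (f d n) μ := fun d n =>
    (integrable_const 1).indicator (hAm d n)
  have hminint : ∀ d n, Integrable (fun ω => min 1 (B d (V n ω))) μ := by
    intro d n
    have hmeas : Measurable fun ω => min 1 (B d (V n ω)) := by
      apply measurable_const.min
      simp only [hB]
      exact (((hVsm n).measurable.div_const ε).mul_const _).add_const _
    refine Integrable.mono' (integrable_const 1) hmeas.aestronglyMeasurable
      (Eventually.of_forall fun ω => ?_)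
    rw [Real.norm_eq_abs, abs_le]
    refine ⟨?_, min_le_left _ _⟩
    have h0 : (0 : ℝ) ≤ min 1 (B d (V n ω)) :=
      le_min zero_le_one (hB0 d _ (hnonneg n ω))
    linarith
  have key : ∀ d n, μ[f d n | ℱ n] ≤ᵐ[μ] fun ω => min 1 (B d (V n ω)) := by
    intro d
    induction d with
    | zero =>
      intro n
      have hAs : MeasurableSet[ℱ n] (A 0 n) := by rw [hA0 n]; exact hSn n
      have hsm : StronglyMeasurable[ℱ n] (f 0 n) :=
        stronglyMeasurable_one.indicator hAs
      rw [condExp_of_stronglyMeasurable (ℱ.le n) hsm (hfint 0 n)]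
      refine Eventually.of_forall fun ω => ?_
      by_cases h : ω ∈ A 0 n
      · have hv : ε ≤ V n ω := by rw [hA0 n] at h; exact h
        have : f 0 n ω = 1 := by simp [hf, Set.indicator_of_mem h]
        rw [this]
        exact le_min le_rfl (hB1 0 _ hv)
      · have : f 0 n ω = 0 := by simp [hf, Set.indicator_of_notMem h]
        rw [this]
        exact le_min zero_le_one (hB0 0 _ (hnonneg n ω))
    | succ d ih =>
      intro n
      set g : Ω → ℝ := ({ω | ε ≤ V n ω}).indicator 1 with hg
      set gc : Ω → ℝ := ({ω | V n ω < ε}).indicator 1 with hgc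
      have hcompl : {ω | V n ω < ε} = {ω | ε ≤ V n ω}ᶜ := by
        ext ω; simp [not_le]
      have hgsm : StronglyMeasurable[ℱ n] g :=
        stronglyMeasurable_one.indicator (hSn n)
      have hgcsm : StronglyMeasurable[ℱ n] gc := by
        refine stronglyMeasurable_one.indicator ?_
        rw [hcompl]; exact (hSn n).compl
      have hgint : Integrable g μ :=
        (integrable_const 1).indicator
          (measurableSet_le measurable_const (hVsm n).measurable)
      have hprod : gc * f d (n + 1) =
          ({ω | V n ω < ε} ∩ A d (n + 1)).indicator 1 := by
        funext ω
        simp only [Pi.mul_apply, hgc, hf, Set.indicator_apply, Set.mem_inter_iff,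
          Pi.one_apply]
        by_cases h1 : ω ∈ {ω | V n ω < ε} <;> by_cases h2 : ω ∈ A d (n + 1) <;>
          simp [h1, h2]
      have hgcint : Integrable (gc * f d (n + 1)) μ := by
        rw [hprod]
        exact (integrable_const 1).indicator
          ((measurableSet_lt (hVsm n).measurable measurable_const).inter
            (hAm d (n + 1)))
      -- pointwise union bound
      have hpt : ∀ ω, f (d + 1) n ω ≤ (g + gc * f d (n + 1)) ω := by
        intro ω
        by_cases h1 : ε ≤ V n ω
        · have h1' : ω ∈ {ω | ε ≤ V n ω} := h1
          have h1'' : ω ∉ {ω | V n ω < ε} := by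
            simp only [Set.mem_setOf_eq, not_lt]; exact h1
          by_cases h2 : ω ∈ A (d + 1) n <;>
            simp [hf, hg, hgc, Set.indicator_apply, h1', h1'', h2]
        · have h1' : ω ∈ {ω | V n ω < ε} := not_le.1 h1
          have h1'' : ω ∉ {ω | ε ≤ V n ω} := h1
          by_cases h3 : ω ∈ A d (n + 1)
          · by_cases h2 : ω ∈ A (d + 1) n <;>
              simp [hf, hg, hgc, Set.indicator_apply, h1', h1'', h2, h3]
          · have h2 : ω ∉ A (d + 1) n := by
              intro hmem
              simp only [hA, Set.mem_setOf_eq] at hmem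
              obtain ⟨k, hk, hkV⟩ := hmem
              rcases k with _ | j
              · exact h1 (by simpa using hkV)
              · refine h3 ?_
                simp only [hA, Set.mem_setOf_eq]
                have hj : j ≤ d := Nat.succ_le_succ_iff.1 hk
                have heq : n + (j + 1) = n + 1 + j := by omega
                rw [heq] at hkV
                exact ⟨j, hj, hkV⟩
            simp [hf, hg, hgc, Set.indicator_apply, h1', h1'', h2, h3]
      -- conditional expectation manipulations
      have step1 : μ[f (d + 1) n | ℱ n] ≤ᵐ[μ] μ[g + gc * f d (n + 1) | ℱ n] :=
        condExp_mono (hfint _ _) (hgint.add hgcint) (Eventually.of_forall hpt)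
      have step2 : μ[g + gc * f d (n + 1) | ℱ n] =ᵐ[μ]
          μ[g | ℱ n] + μ[gc * f d (n + 1) | ℱ n] := condExp_add hgint hgcint _
      have step3 : μ[g | ℱ n] = g :=
        condExp_of_stronglyMeasurable (ℱ.le n) hgsm hgint
      have step4 : μ[gc * f d (n + 1) | ℱ n] =ᵐ[μ] gc * μ[f d (n + 1) | ℱ n] :=
        condExp_mul_of_stronglyMeasurable_left hgcsm hgcint (hfint d (n + 1))
      -- tower + induction hypothesis
      have htower : μ[f d (n + 1) | ℱ n] =ᵐ[μ]
          μ[μ[f d (n + 1) | ℱ (n + 1)] | ℱ n] :=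
        (condExp_condExp_of_le (ℱ.mono (Nat.le_succ n)) (ℱ.le (n + 1))).symm
      have hmono1 : μ[μ[f d (n + 1) | ℱ (n + 1)] | ℱ n] ≤ᵐ[μ]
          μ[(fun ω => min 1 (B d (V (n + 1) ω))) | ℱ n] :=
        condExp_mono integrable_condExp (hminint d (n + 1)) (ih (n + 1))
      have hle1 : μ[(fun ω => min 1 (B d (V (n + 1) ω))) | ℱ n] ≤ᵐ[μ]
          fun _ => (1 : ℝ) := by
        have h := condExp_mono (μ := μ) (m := ℱ n) (hminint d (n + 1))
          (integrable_const 1)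
          (Eventually.of_forall fun ω => min_le_left _ _)
        have hc : μ[(fun _ => (1 : ℝ)) | ℱ n] = fun _ => (1 : ℝ) :=
          condExp_const (ℱ.le n) _
        rwa [hc] at h
      have hBfun : (fun ω => B d (V (n + 1) ω)) =
          ((1 - κ) ^ d / ε) • V (n + 1) +
            (fun _ => (ψ / (κ * ε)) * (1 - (1 - κ) ^ d)) := by
        funext ω
        simp only [hB, Pi.add_apply, Pi.smul_apply, smul_eq_mul]
        ring
      have hBint : Integrable (fun ω => B d (V (n + 1) ω)) μ := by
        rw [hBfun]
        exact ((hint (n + 1)).smul _).add (integrable_const _)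
      have hlin : μ[(fun ω => B d (V (n + 1) ω)) | ℱ n] =ᵐ[μ]
          fun ω => ((1 - κ) ^ d / ε) * (μ[V (n + 1) | ℱ n]) ω +
            (ψ / (κ * ε)) * (1 - (1 - κ) ^ d) := by
        rw [hBfun]
        refine (condExp_add ((hint (n + 1)).smul _) (integrable_const _) _).trans ?_
        have hsmul := condExp_smul (μ := μ) (m := ℱ n)
          (((1 : ℝ) - κ) ^ d / ε) (V (n + 1))
        have hconst : μ[(fun _ => (ψ / (κ * ε)) * (1 - (1 - κ) ^ d) : Ω → ℝ) | ℱ n]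
            = fun _ => (ψ / (κ * ε)) * (1 - (1 - κ) ^ d) := condExp_const (ℱ.le n) _
        filter_upwards [hsmul] with ω hω
        simp only [Pi.add_apply, Pi.smul_apply, smul_eq_mul] at hω ⊢
        rw [hω, hconst]
      have hleB : μ[(fun ω => min 1 (B d (V (n + 1) ω))) | ℱ n] ≤ᵐ[μ]
          fun ω => B (d + 1) (V n ω) := by
        have h0 : μ[(fun ω => min 1 (B d (V (n + 1) ω))) | ℱ n] ≤ᵐ[μ]
            μ[(fun ω => B d (V (n + 1) ω)) | ℱ n] :=
          condExp_mono (hminint d (n + 1)) hBint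
            (Eventually.of_forall fun ω => min_le_right _ _)
        filter_upwards [h0, hlin, hdrift n] with ω h0ω hlω hdω
        have hc : (0 : ℝ) ≤ (1 - κ) ^ d / ε := div_nonneg (hp0 d) hε.le
        have hmul := mul_le_mul_of_nonneg_left hdω hc
        have heq : (1 - κ) ^ d / ε * (V n ω - κ * V n ω + ψ) +
            (ψ / (κ * ε)) * (1 - (1 - κ) ^ d) = B (d + 1) (V n ω) := by
          simp only [hB]
          field_simp
          ring
        exact h0ω.trans (hlω.le.trans ((add_le_add_left hmul _).trans heq.le))
      have hfdn : μ[f d (n + 1) | ℱ n] ≤ᵐ[μ]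
          fun ω => min 1 (B (d + 1) (V n ω)) := by
        filter_upwards [htower, hmono1, hle1, hleB] with ω ht hm h1 hb
        rw [ht]
        exact le_min (hm.trans h1) (hm.trans hb)
      filter_upwards [step1, step2, step4, hfdn] with ω h1 h2 h4 h5
      have hbound : (μ[f (d + 1) n | ℱ n]) ω ≤
          g ω + gc ω * (μ[f d (n + 1) | ℱ n]) ω := by
        have e2 : (μ[g | ℱ n] + μ[gc * f d (n + 1) | ℱ n]) ω =
            g ω + gc ω * (μ[f d (n + 1) | ℱ n]) ω := by
          simp only [Pi.add_apply, step3]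
          rw [h4]
          simp
        linarith [h1, h2, e2]
      by_cases hV : ε ≤ V n ω
      · have hgω : g ω = 1 := Set.indicator_of_mem (show ω ∈ {ω | ε ≤ V n ω} from hV) _
        have hgcω : gc ω = 0 :=
          Set.indicator_of_notMem (by simp only [Set.mem_setOf_eq, not_lt]; exact hV) _
        rw [hgω, hgcω] at hbound
        simp only [zero_mul, add_zero] at hbound
        exact hbound.trans (le_min le_rfl (hB1 (d + 1) _ hV))
      · have hgω : g ω = 0 := Set.indicator_of_notMem (show ω ∉ {ω | ε ≤ V n ω} from hV) _
        have hgcω : gc ω = 1 := Set.indicator_of_mem (show ω ∈ {ω | V n ω < ε} from not_le.1 hV) _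
        rw [hgω, hgcω] at hbound
        simp only [zero_add, one_mul] at hbound
        exact hbound.trans h5
  have hTset : {ω | ∃ k ≤ T, ε ≤ V k ω} = A T 0 := by
    ext ω; simp [hA]
  rw [hTset]
  calc (μ (A T 0)).toReal
      = ∫ ω, f T 0 ω ∂μ := (integral_indicator_one (hAm T 0)).symm
    _ = ∫ ω, (μ[f T 0 | ℱ 0]) ω ∂μ := (integral_condExp (ℱ.le 0)).symm
    _ ≤ ∫ ω, min 1 (B T (V 0 ω)) ∂μ :=
        integral_mono_ae integrable_condExp (hminint T 0) (key T 0)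
    _ = min 1 (B T v0) := by rw [hV0]; simp
    _ ≤ B T v0 := min_le_right _ _
    _ = (v0 / ε) * (1 - κ) ^ T + (ψ / (κ * ε)) * (1 - (1 - κ) ^ T) := by
        simp only [hB]
end

section
/- Let Λ = diag(λ₁,…,λ_N) with all λ_i > 0, and let Δ be a nonnegative N×N matrix with zero diagonal. If the spectral radius of Λ⁻¹Δ is strictly less than 1, then there exists a vector μ ∈ ℝ^N with all entries strictly positive such that μᵀ(-Λ + Δ) < 0 componentwise (i.e., every entry of the row vector μᵀ(-Λ+Δ) is negative). -/
open Matrix Filter Topology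
open scoped ENNReal NNReal

attribute [local instance] Matrix.linftyOpNormedRing Matrix.linftyOpNormedAlgebra

lemma entry_le_linfty {N : ℕ} (M : Matrix (Fin N) (Fin N) ℂ) (i j : Fin N) :
    ‖M i j‖ ≤ ‖M‖ := by
  have h : ‖M i j‖₊ ≤ ‖M‖₊ := by
    rw [Matrix.linfty_opNNNorm_def]
    exact le_trans
      (Finset.single_le_sum (f := fun k => ‖M i k‖₊) (fun _ _ => zero_le) (Finset.mem_univ j))
      (Finset.le_sup (f := fun i => ∑ k : Fin N, ‖M i k‖₊) (Finset.mem_univ i))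
  exact_mod_cast h

-- geometric decay of powers from spectral radius < 1
lemma pow_entry_summable {N : ℕ} (hN : 0 < N) (A : Matrix (Fin N) (Fin N) ℝ)
    (hspec : ∀ z ∈ spectrum ℂ (A.map (Complex.ofReal ·)), ‖z‖ < 1) :
    ∀ i j, Summable (fun n => (A ^ n) i j) := by
  haveI : Nonempty (Fin N) := ⟨⟨0, hN⟩⟩
  haveI : CompleteSpace (Matrix (Fin N) (Fin N) ℂ) := FiniteDimensional.complete ℂ _
  haveI : Nontrivial (Matrix (Fin N) (Fin N) ℂ) := by
    refine ⟨0, 1, fun h => ?_⟩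
    have := congrFun (congrFun h ⟨0, hN⟩) ⟨0, hN⟩
    simp [Matrix.one_apply] at this
  set Ac : Matrix (Fin N) (Fin N) ℂ := A.map (Complex.ofReal ·) with hAc
  have hpowmap : ∀ n : ℕ, Ac ^ n = (A ^ n).map (Complex.ofReal ·) := by
    intro n
    have : Ac = Complex.ofRealHom.mapMatrix A := rfl
    rw [this, ← map_pow]
    rfl
  have hρ : spectralRadius ℂ Ac < 1 := by
    have h := spectrum.spectralRadius_lt_of_forall_lt (a := Ac) (r := 1) ?_
    · simpa using h
    · intro z hz
      have := hspec z hz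
      rw [← NNReal.coe_lt_coe]
      simpa using this
  have hρtop : spectralRadius ℂ Ac ≠ ⊤ := hρ.trans_le le_top |>.ne
  -- real Gelfand limit
  have hgel := spectrum.pow_nnnorm_pow_one_div_tendsto_nhds_spectralRadius Ac
  have htoReal : Tendsto (fun n : ℕ => ‖Ac ^ n‖ ^ (1 / (n : ℝ))) atTop
      (𝓝 (spectralRadius ℂ Ac).toReal) := by
    have := (ENNReal.tendsto_toReal hρtop).comp hgel
    convert this using 2 with n
    rw [Function.comp_apply, ← ENNReal.toReal_rpow]
    simp [ENNReal.coe_toReal, coe_nnnorm]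
  set t : ℝ := (spectralRadius ℂ Ac).toReal with ht
  have ht0 : 0 ≤ t := ENNReal.toReal_nonneg
  have ht1 : t < 1 := by
    rw [ht]
    rw [show (1:ℝ) = (1:ℝ≥0∞).toReal by simp]
    exact ENNReal.toReal_strict_mono (by simp) hρ
  set r : ℝ := (t + 1) / 2 with hr
  have hr0 : 0 < r := by positivity
  have hr1 : r < 1 := by rw [hr]; linarith
  have htr : t < r := by rw [hr]; linarith
  have hev : ∀ᶠ n : ℕ in atTop, ‖Ac ^ n‖ ^ (1 / (n : ℝ)) < r :=
    htoReal.eventually_lt_const htr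
  have hbound : ∀ᶠ n : ℕ in atTop, ‖Ac ^ n‖ ≤ r ^ n := by
    filter_upwards [hev, Filter.eventually_ge_atTop 1] with n hn hn1
    have hnn : (n : ℝ) ≠ 0 := Nat.cast_ne_zero.mpr (by omega)
    have h1 : ‖Ac ^ n‖ = (‖Ac ^ n‖ ^ (1 / (n : ℝ))) ^ (n : ℕ) := by
      rw [← Real.rpow_natCast (‖Ac ^ n‖ ^ (1 / (n : ℝ))) n, ← Real.rpow_mul (norm_nonneg _)]
      rw [one_div, inv_mul_cancel₀ hnn, Real.rpow_one]
    rw [h1]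
    exact le_of_lt (pow_lt_pow_left₀ hn (Real.rpow_nonneg (norm_nonneg _) _) (by omega))
  intro i j
  apply Summable.of_norm_bounded_eventually_nat
    (summable_geometric_of_lt_one hr0.le hr1)
  filter_upwards [hbound] with n hn
  calc ‖(A ^ n) i j‖ = ‖(Ac ^ n) i j‖ := by
        rw [hpowmap n]; simp [Matrix.map_apply, Complex.norm_real,
          Real.norm_eq_abs]
    _ ≤ ‖Ac ^ n‖ := entry_le_linfty _ i j
    _ ≤ r ^ n := hn

theorem smallgain_positive_left_vector
    {N : ℕ} (hN : 0 < N)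
    (lam : Fin N → ℝ) (hlam : ∀ i, 0 < lam i)
    (Δ : Matrix (Fin N) (Fin N) ℝ)
    (hΔnonneg : ∀ i j, 0 ≤ Δ i j) (hΔdiag : ∀ i, Δ i i = 0)
    (hspec : ∀ z ∈ spectrum ℂ (((Matrix.diagonal lam)⁻¹ * Δ).map (Complex.ofReal ·)),
      ‖z‖ < 1) :
    ∃ μ : Fin N → ℝ, (∀ i, 0 < μ i) ∧
      ∀ j, (μ ᵥ* (-(Matrix.diagonal lam) + Δ)) j < 0 := by
  set A : Matrix (Fin N) (Fin N) ℝ := (Matrix.diagonal lam)⁻¹ * Δ with hA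
  have hinv : (Matrix.diagonal lam)⁻¹ = Matrix.diagonal (fun i => (lam i)⁻¹) := by
    apply Matrix.inv_eq_right_inv
    rw [Matrix.diagonal_mul_diagonal]
    rw [show (fun i => lam i * (lam i)⁻¹) = fun _ => (1:ℝ) from
      funext fun i => mul_inv_cancel₀ (hlam i).ne']
    exact Matrix.diagonal_one
  have hAentry : ∀ i j, A i j = (lam i)⁻¹ * Δ i j := by
    intro i j
    rw [hA, hinv]
    simp [Matrix.mul_apply, Matrix.diagonal_apply, Finset.sum_ite_eq, ite_mul]
  have hA0 : ∀ i j, 0 ≤ A i j := fun i j => by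
    rw [hAentry]; exact mul_nonneg (inv_nonneg.mpr (hlam i).le) (hΔnonneg i j)
  have hpow0 : ∀ n i j, 0 ≤ (A ^ n) i j := by
    intro n
    induction n with
    | zero => intro i j; simp [Matrix.one_apply]; split <;> norm_num
    | succ n ih =>
      intro i j
      rw [pow_succ, Matrix.mul_apply]
      exact Finset.sum_nonneg fun k _ => mul_nonneg (ih i k) (hA0 k j)
  have hsum : ∀ i j, Summable (fun n => (A ^ n) i j) := pow_entry_summable hN A hspec
  -- column sums
  set c : ℕ → Fin N → ℝ := fun n j => ∑ i, (A ^ n) i j with hc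
  have hc_sum : ∀ j, Summable (fun n => c n j) := by
    intro j
    exact summable_sum fun i _ => hsum i j
  have hc0 : ∀ j, c 0 j = 1 := by
    intro j
    simp [hc, Matrix.one_apply]
  have hc_nonneg : ∀ n j, 0 ≤ c n j := fun n j =>
    Finset.sum_nonneg fun i _ => hpow0 n i j
  set ν : Fin N → ℝ := fun j => ∑' n, c n j with hν
  have hν1 : ∀ j, 1 ≤ ν j := by
    intro j
    rw [← hc0 j]
    exact Summable.le_tsum (hc_sum j) 0 fun m _ => hc_nonneg m j
  have hstep : ∀ n j, c (n + 1) j = ∑ i, c n i * A i j := by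
    intro n j
    simp only [hc, pow_succ, Matrix.mul_apply]
    rw [Finset.sum_comm]
    exact Finset.sum_congr rfl fun i _ => (Finset.sum_mul _ _ _).symm
  have key : ∀ j, ∑ i, ν i * A i j = ν j - 1 := by
    intro j
    have h1 : ∀ i, ν i * A i j = ∑' n, c n i * A i j := fun i =>
      (tsum_mul_right (a := A i j) (f := fun n => c n i)).symm
    calc ∑ i, ν i * A i j = ∑ i, ∑' n, c n i * A i j := Finset.sum_congr rfl fun i _ => h1 i
      _ = ∑' n, ∑ i, c n i * A i j :=
          (Summable.tsum_finsetSum fun i _ => (hc_sum i).mul_right (A i j)).symm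
      _ = ∑' n, c (n + 1) j := by
          exact tsum_congr fun n => (hstep n j).symm
      _ = ν j - 1 := by
          have := Summable.tsum_eq_zero_add (hc_sum j)
          rw [hc0 j] at this
          rw [hν]
          linarith [this]
  refine ⟨fun i => ν i / lam i, fun i => div_pos (lt_of_lt_of_le one_pos (hν1 i)) (hlam i), ?_⟩
  intro j
  have hvm : ((fun i => ν i / lam i) ᵥ* (-(Matrix.diagonal lam) + Δ)) j
      = ∑ i, (ν i / lam i) * ((-(Matrix.diagonal lam) + Δ) i j) := by
    simp [Matrix.vecMul, dotProduct]
  rw [hvm]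
  have hdiagsum : ∑ i, (ν i / lam i) * Matrix.diagonal lam i j = ν j := by
    rw [Finset.sum_eq_single j]
    · rw [Matrix.diagonal_apply_eq]; exact div_mul_cancel₀ _ (hlam j).ne'
    · intro i _ hij; rw [Matrix.diagonal_apply_ne _ hij, mul_zero]
    · intro h; exact absurd (Finset.mem_univ j) h
  have hmain : ∑ i, (ν i / lam i) * ((-(Matrix.diagonal lam) + Δ) i j) = -1 := by
    have expand : ∀ i, (ν i / lam i) * ((-(Matrix.diagonal lam) + Δ) i j)
        = ν i * A i j - (ν i / lam i) * Matrix.diagonal lam i j := by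
      intro i
      rw [hAentry]
      simp only [Matrix.add_apply, Matrix.neg_apply]
      rw [div_eq_mul_inv]
      ring
    rw [Finset.sum_congr rfl fun i _ => expand i, Finset.sum_sub_distrib, key j, hdiagsum]
    ring
  rw [hmain]
  norm_num
end
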